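/- For natural numbers N, k, r with k + r ≤ N, the inequality C(N-r, k)/C(N, k) ≤ ((N - k)/N)^r holds, where C denotes binomial coefficients. Equivalently, the uniform-subset ablation quantity Δ^L = 1 - C(N-r,k)/C(N,k) is at least the Bernoulli quantity Δ^S = 1 - (1 - k/N)^r when the selection probability is p = 1 - k/N. -/

import Mathlib

lemma aux10 (N k : ℕ) (hN : 0 < N) : ∀ r, k + r ≤ N →
    ((N - r).choose k : ℝ) / (N.choose k : ℝ) ≤ (((N : ℝ) - k) / N) ^ r := by
  intro r
  induction r with
  | zero =>
    intro h
    simp only [Nat.sub_zero, pow_zero]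
    have hc : 0 < N.choose k := Nat.choose_pos (by omega)
    rw [div_self (by exact_mod_cast hc.ne')]
  | succ r ih =>
    intro h
    have h' : k + r ≤ N := by omega
    have hrN : r < N := by omega
    -- key identity : C(N-r-1,k) * (N-r) = C(N-r,k) * (N-r-k)
    have key := Nat.choose_mul_succ_eq (N - r - 1) k
    have hsub : N - r - 1 + 1 = N - r := by omega
    rw [hsub] at key
    have keyR : ((N - r - 1).choose k : ℝ) * ((N - r : ℕ) : ℝ) =
        ((N - r).choose k : ℝ) * ((N - r - k : ℕ) : ℝ) := by exact_mod_cast key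
    have e1 : ((N - r : ℕ) : ℝ) = (N:ℝ) - r := by
      push_cast [Nat.cast_sub hrN.le]; ring
    have e2 : ((N - r - k : ℕ) : ℝ) = (N:ℝ) - r - k := by
      have h2 : N - r - k = N - (r + k) := by omega
      rw [h2]
      push_cast [Nat.cast_sub (show r + k ≤ N by omega)]; ring
    rw [e1, e2] at keyR
    have hNr : (0:ℝ) < (N:ℝ) - r := by
      have : (r:ℝ) < N := by exact_mod_cast hrN
      linarith
    have hNpos : (0:ℝ) < N := by exact_mod_cast hN
    have hcpos : (0:ℝ) < (N.choose k : ℝ) := by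
      exact_mod_cast Nat.choose_pos (show k ≤ N by omega)
    have hkR : (0:ℝ) ≤ (k:ℝ) := by positivity
    have hrR : (0:ℝ) ≤ (r:ℝ) := by positivity
    have hNk : (0:ℝ) ≤ (N:ℝ) - k := by
      have : (k:ℝ) ≤ N := by exact_mod_cast (show k ≤ N by omega)
      linarith
    have hNrk : (0:ℝ) ≤ (N:ℝ) - r - k := by
      have : ((k:ℝ) + r) ≤ N := by exact_mod_cast h'.trans_eq rfl
      linarith
    -- ratio bound
    have hratio : ((N:ℝ) - r - k) / ((N:ℝ) - r) ≤ ((N:ℝ) - k) / N := by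
      rw [div_le_div_iff₀ hNr hNpos]
      nlinarith [mul_nonneg hkR hrR]
    have hre : N - (r + 1) = N - r - 1 := by omega
    have step : ((N - (r+1)).choose k : ℝ) / (N.choose k : ℝ) =
        (((N:ℝ) - r - k) / ((N:ℝ) - r)) * (((N - r).choose k : ℝ) / (N.choose k : ℝ)) := by
      rw [hre]
      field_simp
      linear_combination keyR
    rw [step, pow_succ]
    have hb : ((N - r).choose k : ℝ) / (N.choose k : ℝ) ≤ (((N:ℝ) - k) / N) ^ r := ih h'
    have hbnn : (0:ℝ) ≤ ((N - r).choose k : ℝ) / (N.choose k : ℝ) := by positivity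
    have hrat_nn : (0:ℝ) ≤ ((N:ℝ) - r - k) / ((N:ℝ) - r) := by positivity
    calc (((N:ℝ) - r - k) / ((N:ℝ) - r)) * (((N - r).choose k : ℝ) / (N.choose k : ℝ))
        ≤ (((N:ℝ) - k) / N) * (((N - r).choose k : ℝ) / (N.choose k : ℝ)) :=
          mul_le_mul_of_nonneg_right hratio hbnn
      _ ≤ (((N:ℝ) - k) / N) * (((N:ℝ) - k) / N) ^ r :=
          mul_le_mul_of_nonneg_left hb (by positivity)
      _ = (((N:ℝ) - k) / N) ^ r * (((N:ℝ) - k) / N) := by ring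

theorem stmt10 (N k r : ℕ) (h : k + r ≤ N) :
    (((N - r).choose k : ℝ) / (N.choose k : ℝ) ≤ (((N : ℝ) - k) / N) ^ r) ∧
    (1 - (((N : ℝ) - k) / N) ^ r ≤ 1 - ((N - r).choose k : ℝ) / (N.choose k : ℝ)) := by
  rcases Nat.eq_zero_or_pos N with hN | hN
  · have hk : k = 0 := by omega
    have hr : r = 0 := by omega
    subst hN hk hr
    norm_num
  · have := aux10 N k hN r h
    exact ⟨this, by linarith⟩
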